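/- arXiv:2103.07375 — 2 statements merged into one kernel-verified Lean document; each statement's English description precedes it below -/
import Mathlib

section
/- For s,t ≥ 2, the grid graph P_s □ P_t (Cartesian product of paths) satisfies edim_f(P_s □ P_t) = 2. -/
open Finset
open scoped Classical

variable {V : Type*}

/-- Distance from a vertex to an edge: minimum distance to an endpoint. -/
noncomputable def SimpleGraph.edgeDist (G : SimpleGraph V) (e : Sym2 V) (v : V) : ℕ :=
  Sym2.lift ⟨fun a b => min (G.dist a v) (G.dist b v), fun a b => min_comm _ _⟩ e

/-- A set of vertices is an edge resolving set if every pair of distinct edges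
is distinguished by some vertex of the set. -/
def SimpleGraph.IsEdgeResolvingSet (G : SimpleGraph V) (S : Set V) : Prop :=
  ∀ e₁ ∈ G.edgeSet, ∀ e₂ ∈ G.edgeSet, e₁ ≠ e₂ →
    ∃ s ∈ S, G.edgeDist e₁ s ≠ G.edgeDist e₂ s

/-- The edge dimension: minimum cardinality of an edge resolving set. -/
noncomputable def SimpleGraph.edim (G : SimpleGraph V) [Fintype V] : ℕ :=
  sInf {n | ∃ S : Finset V, G.IsEdgeResolvingSet ↑S ∧ S.card = n}

/-- An edge resolving function: a `[0,1]`-valued weighting of the vertices such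
that every pair of distinct edges is resolved by total weight at least 1. -/
def SimpleGraph.IsEdgeResolvingFunction (G : SimpleGraph V) [Fintype V] (g : V → ℝ) : Prop :=
  (∀ v, 0 ≤ g v ∧ g v ≤ 1) ∧
  ∀ e₁ ∈ G.edgeSet, ∀ e₂ ∈ G.edgeSet, e₁ ≠ e₂ →
    1 ≤ ∑ z ∈ Finset.univ.filter (fun z => G.edgeDist e₁ z ≠ G.edgeDist e₂ z), g z

/-- The fractional edge dimension. -/
noncomputable def SimpleGraph.edimf (G : SimpleGraph V) [Fintype V] : ℝ :=
  sInf {x | ∃ g : V → ℝ, G.IsEdgeResolvingFunction g ∧ ∑ v, g v = x}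

section Aux

open SimpleGraph

private lemma lip_walk {W : Type*} {G : SimpleGraph W} (f : W → ℕ)
    (hf : ∀ a b, G.Adj a b → Nat.dist (f a) (f b) ≤ 1) {u v : W} (w : G.Walk u v) :
    Nat.dist (f u) (f v) ≤ w.length := by
  induction w with
  | nil => simp
  | @cons a b c h p ih =>
      have h1 := hf a b h
      have htri := Nat.dist.triangle_inequality (f a) (f b) (f c)
      simp only [SimpleGraph.Walk.length_cons]
      omega

private lemma pathGraph_dist (n : ℕ) (i j : Fin n) :
    (SimpleGraph.pathGraph n).dist i j = Nat.dist i.val j.val := by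
  have hne : Nonempty (Fin n) := ⟨i⟩
  have hconn : (SimpleGraph.pathGraph n).Connected := ⟨pathGraph_preconnected n⟩
  refine le_antisymm ?_ ?_
  · suffices H : ∀ d (i j : Fin n), Nat.dist i.val j.val = d →
        (SimpleGraph.pathGraph n).dist i j ≤ d from H _ i j rfl
    intro d
    induction d with
    | zero =>
        intro i j h
        have : i = j := Fin.ext (Nat.eq_of_dist_eq_zero h)
        subst this; simp
    | succ d ih =>
        intro i j h
        rcases lt_trichotomy i.val j.val with hlt | heq | hgt
        · have hi' : i.val + 1 < n := lt_of_le_of_lt hlt j.isLt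
          set i' : Fin n := ⟨i.val + 1, hi'⟩ with hi'def
          have hadj : (SimpleGraph.pathGraph n).Adj i i' := pathGraph_adj.mpr (Or.inl rfl)
          have h2 : Nat.dist i'.val j.val = d := by
            simp only [Nat.dist, hi'def] at h ⊢; omega
          calc (SimpleGraph.pathGraph n).dist i j
              ≤ (SimpleGraph.pathGraph n).dist i i' + (SimpleGraph.pathGraph n).dist i' j :=
                hconn.dist_triangle
            _ ≤ 1 + d := add_le_add (le_of_eq (dist_eq_one_iff_adj.mpr hadj)) (ih i' j h2)
            _ = d + 1 := by omega
        · exact absurd h (by simp [Nat.dist, heq])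
        · have h1 : 1 ≤ i.val := by omega
          have hi' : i.val - 1 < n := by omega
          set i' : Fin n := ⟨i.val - 1, hi'⟩ with hi'def
          have hadj : (SimpleGraph.pathGraph n).Adj i i' :=
            pathGraph_adj.mpr (Or.inr (by show i.val - 1 + 1 = i.val; omega))
          have h2 : Nat.dist i'.val j.val = d := by
            simp only [Nat.dist, hi'def] at h ⊢; omega
          calc (SimpleGraph.pathGraph n).dist i j
              ≤ (SimpleGraph.pathGraph n).dist i i' + (SimpleGraph.pathGraph n).dist i' j :=
                hconn.dist_triangle
            _ ≤ 1 + d := add_le_add (le_of_eq (dist_eq_one_iff_adj.mpr hadj)) (ih i' j h2)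
            _ = d + 1 := by omega
  · obtain ⟨w, hw⟩ := (pathGraph_preconnected n i j).exists_walk_length_eq_dist
    have := lip_walk (G := SimpleGraph.pathGraph n) (fun x => x.val)
      (fun a b hab => by rcases pathGraph_adj.mp hab with h | h <;> simp [Nat.dist] <;> omega) w
    omega

private lemma grid_dist {s t : ℕ} (x y : Fin s × Fin t) :
    ((SimpleGraph.pathGraph s).boxProd (SimpleGraph.pathGraph t)).dist x y
      = Nat.dist x.1.val y.1.val + Nat.dist x.2.val y.2.val := by
  obtain ⟨x1, x2⟩ := x
  obtain ⟨y1, y2⟩ := y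
  have hns : Nonempty (Fin s) := ⟨x1⟩
  have hnt : Nonempty (Fin t) := ⟨x2⟩
  have hc : ((SimpleGraph.pathGraph s).boxProd (SimpleGraph.pathGraph t)).Connected :=
    Connected.boxProd ⟨pathGraph_preconnected s⟩ ⟨pathGraph_preconnected t⟩
  refine le_antisymm ?_ ?_
  · obtain ⟨w1, hw1⟩ := (pathGraph_preconnected s x1 y1).exists_walk_length_eq_dist
    obtain ⟨w2, hw2⟩ := (pathGraph_preconnected t x2 y2).exists_walk_length_eq_dist
    have hW := SimpleGraph.dist_le
      ((Walk.boxProdLeft (H := SimpleGraph.pathGraph t) x2 w1).append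
        (Walk.boxProdRight (SimpleGraph.pathGraph s) y1 w2))
    rw [Walk.length_append] at hW
    rw [show (Walk.boxProdLeft (H := SimpleGraph.pathGraph t) x2 w1).length = w1.length from
      Walk.length_map _ _, show (Walk.boxProdRight (SimpleGraph.pathGraph s) y1 w2).length =
      w2.length from Walk.length_map _ _] at hW
    rw [pathGraph_dist] at hw1 hw2
    dsimp only at hW ⊢
    omega
  · obtain ⟨w, hw⟩ := hc.exists_walk_length_eq_dist (x1, x2) (y1, y2)
    have hf : ∀ a b : Fin s × Fin t,
        ((SimpleGraph.pathGraph s).boxProd (SimpleGraph.pathGraph t)).Adj a b →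
        Nat.dist (Nat.dist a.1.val y1.val + Nat.dist a.2.val y2.val)
          (Nat.dist b.1.val y1.val + Nat.dist b.2.val y2.val) ≤ 1 := by
      rintro ⟨a1, a2⟩ ⟨b1, b2⟩ hab
      rcases boxProd_adj.mp hab with ⟨h, he⟩ | ⟨h, he⟩ <;>
        rcases pathGraph_adj.mp h with h' | h' <;>
          · simp only [Prod.ext_iff] at he ⊢
            obtain he' : _ = _ := he
            simp only [Nat.dist] at *
            simp_all [Fin.ext_iff]
            omega
    have := lip_walk _ hf w
    simp only [Nat.dist] at this ⊢
    omega

private lemma grid_edgeDist {s t : ℕ} (p q z : Fin s × Fin t) :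
    ((SimpleGraph.pathGraph s).boxProd (SimpleGraph.pathGraph t)).edgeDist s(p, q) z
      = min (Nat.dist p.1.val z.1.val + Nat.dist p.2.val z.2.val)
          (Nat.dist q.1.val z.1.val + Nat.dist q.2.val z.2.val) := by
  simp [SimpleGraph.edgeDist, grid_dist]

private lemma grid_edge_cases {s t : ℕ} {e : Sym2 (Fin s × Fin t)}
    (he : e ∈ ((SimpleGraph.pathGraph s).boxProd (SimpleGraph.pathGraph t)).edgeSet) :
    ∃ p q : Fin s × Fin t, e = s(p, q) ∧
      ((p.1.val + 1 = q.1.val ∧ p.2 = q.2) ∨ (p.1 = q.1 ∧ p.2.val + 1 = q.2.val)) := by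
  induction e with
  | _ a b =>
    rw [SimpleGraph.mem_edgeSet] at he
    rcases boxProd_adj.mp he with ⟨h, he2⟩ | ⟨h, he2⟩ <;> rcases pathGraph_adj.mp h with h' | h'
    · exact ⟨a, b, rfl, Or.inl ⟨h', he2⟩⟩
    · exact ⟨b, a, Sym2.eq_swap, Or.inl ⟨h', he2.symm⟩⟩
    · exact ⟨a, b, rfl, Or.inr ⟨he2, h'⟩⟩
    · exact ⟨b, a, Sym2.eq_swap, Or.inr ⟨he2.symm, h'⟩⟩

set_option maxHeartbeats 2000000 in
private lemma grid_resolve {s t : ℕ} (hs : 2 ≤ s) (ht : 2 ≤ t)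
    {e1 e2 : Sym2 (Fin s × Fin t)}
    (he1 : e1 ∈ ((SimpleGraph.pathGraph s).boxProd (SimpleGraph.pathGraph t)).edgeSet)
    (he2 : e2 ∈ ((SimpleGraph.pathGraph s).boxProd (SimpleGraph.pathGraph t)).edgeSet)
    (h1 : ((SimpleGraph.pathGraph s).boxProd (SimpleGraph.pathGraph t)).edgeDist e1
            (⟨0, by omega⟩, ⟨0, by omega⟩)
        = ((SimpleGraph.pathGraph s).boxProd (SimpleGraph.pathGraph t)).edgeDist e2
            (⟨0, by omega⟩, ⟨0, by omega⟩))
    (h2 : ((SimpleGraph.pathGraph s).boxProd (SimpleGraph.pathGraph t)).edgeDist e1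
            (⟨s - 1, by omega⟩, ⟨0, by omega⟩)
        = ((SimpleGraph.pathGraph s).boxProd (SimpleGraph.pathGraph t)).edgeDist e2
            (⟨s - 1, by omega⟩, ⟨0, by omega⟩)) :
    e1 = e2 := by
  obtain ⟨p, q, rfl, ho1⟩ := grid_edge_cases he1
  obtain ⟨p', q', rfl, ho2⟩ := grid_edge_cases he2
  simp only [grid_edgeDist] at h1 h2
  simp only [Nat.dist, Nat.sub_zero, Nat.zero_sub, Nat.add_zero,
    Nat.zero_add] at h1 h2
  have b1 := p.1.isLt; have b2 := p.2.isLt; have b3 := q.1.isLt; have b4 := q.2.isLt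
  have b5 := p'.1.isLt; have b6 := p'.2.isLt; have b7 := q'.1.isLt; have b8 := q'.2.isLt
  rcases ho1 with ⟨hA, hB⟩ | ⟨hA, hB⟩ <;> rcases ho2 with ⟨hC, hD⟩ | ⟨hC, hD⟩ <;>
    simp only [Fin.ext_iff] at hA hB hC hD
  · have key : p.1.val = p'.1.val ∧ p.2.val = p'.2.val ∧ q.1.val = q'.1.val ∧
        q.2.val = q'.2.val := by omega
    obtain ⟨k1, k2, k3, k4⟩ := key
    have hp : p = p' := Prod.ext_iff.mpr ⟨Fin.ext k1, Fin.ext k2⟩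
    have hq : q = q' := Prod.ext_iff.mpr ⟨Fin.ext k3, Fin.ext k4⟩
    rw [hp, hq]
  · exfalso; omega
  · exfalso; omega
  · have key : p.1.val = p'.1.val ∧ p.2.val = p'.2.val ∧ q.1.val = q'.1.val ∧
        q.2.val = q'.2.val := by omega
    obtain ⟨k1, k2, k3, k4⟩ := key
    have hp : p = p' := Prod.ext_iff.mpr ⟨Fin.ext k1, Fin.ext k2⟩
    have hq : q = q' := Prod.ext_iff.mpr ⟨Fin.ext k3, Fin.ext k4⟩
    rw [hp, hq]


private lemma grid_upper {s t : ℕ} (hs : 2 ≤ s) (ht : 2 ≤ t) :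
    ∃ g : Fin s × Fin t → ℝ,
      ((SimpleGraph.pathGraph s).boxProd (SimpleGraph.pathGraph t)).IsEdgeResolvingFunction g ∧
      ∑ v, g v = 2 := by
  have hc1 : (0 : ℕ) < s := by omega
  have hc2 : (0 : ℕ) < t := by omega
  set c1 : Fin s × Fin t := (⟨0, by omega⟩, ⟨0, by omega⟩) with hc1d
  set c2 : Fin s × Fin t := (⟨s - 1, by omega⟩, ⟨0, by omega⟩) with hc2d
  have hc12 : c1 ≠ c2 := by
    simp only [hc1d, hc2d, ne_eq, Prod.ext_iff, Fin.ext_iff]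
    omega
  refine ⟨fun v => (if v = c1 then (1 : ℝ) else 0) + (if v = c2 then (1 : ℝ) else 0),
    ⟨?_, ?_⟩, ?_⟩
  · intro v
    dsimp only
    constructor
    · split_ifs <;> norm_num
    · split_ifs with hA hB
      · exact absurd (hA.symm.trans hB) hc12
      all_goals norm_num
  · intro e1 he1 e2 he2 hne
    have hkey : ((SimpleGraph.pathGraph s).boxProd (SimpleGraph.pathGraph t)).edgeDist e1 c1
          ≠ ((SimpleGraph.pathGraph s).boxProd (SimpleGraph.pathGraph t)).edgeDist e2 c1
        ∨ ((SimpleGraph.pathGraph s).boxProd (SimpleGraph.pathGraph t)).edgeDist e1 c2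
          ≠ ((SimpleGraph.pathGraph s).boxProd (SimpleGraph.pathGraph t)).edgeDist e2 c2 := by
      by_contra hcon
      push_neg at hcon
      exact hne (grid_resolve hs ht he1 he2 hcon.1 hcon.2)
    rcases hkey with hk | hk
    · have hmem : c1 ∈ Finset.univ.filter (fun z =>
          ((SimpleGraph.pathGraph s).boxProd (SimpleGraph.pathGraph t)).edgeDist e1 z
            ≠ ((SimpleGraph.pathGraph s).boxProd (SimpleGraph.pathGraph t)).edgeDist e2 z) :=
        Finset.mem_filter.mpr ⟨Finset.mem_univ _, hk⟩
      have hle := Finset.single_le_sum (f := fun v =>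
          (if v = c1 then (1 : ℝ) else 0) + (if v = c2 then (1 : ℝ) else 0))
        (fun i _ => by split_ifs <;> norm_num) hmem
      rw [if_pos rfl, if_neg hc12, add_zero] at hle
      exact hle
    · have hmem : c2 ∈ Finset.univ.filter (fun z =>
          ((SimpleGraph.pathGraph s).boxProd (SimpleGraph.pathGraph t)).edgeDist e1 z
            ≠ ((SimpleGraph.pathGraph s).boxProd (SimpleGraph.pathGraph t)).edgeDist e2 z) :=
        Finset.mem_filter.mpr ⟨Finset.mem_univ _, hk⟩
      have hle := Finset.single_le_sum (f := fun v =>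
          (if v = c1 then (1 : ℝ) else 0) + (if v = c2 then (1 : ℝ) else 0))
        (fun i _ => by split_ifs <;> norm_num) hmem
      rw [if_pos rfl, if_neg (Ne.symm hc12), zero_add] at hle
      exact hle
  · rw [Finset.sum_add_distrib]
    rw [Finset.sum_ite_eq' Finset.univ c1 (fun _ => (1 : ℝ)),
      Finset.sum_ite_eq' Finset.univ c2 (fun _ => (1 : ℝ))]
    simp
    norm_num

set_option maxHeartbeats 1000000 in
private lemma grid_lower {s t : ℕ} (hs : 2 ≤ s) (ht : 2 ≤ t) (g : Fin s × Fin t → ℝ)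
    (hg : ((SimpleGraph.pathGraph s).boxProd (SimpleGraph.pathGraph t)).IsEdgeResolvingFunction g) :
    2 ≤ ∑ v, g v := by
  obtain ⟨hg01, hgres⟩ := hg
  have corner : ∀ p q1 q2 : Fin s × Fin t,
      ((SimpleGraph.pathGraph s).boxProd (SimpleGraph.pathGraph t)).Adj p q1 →
      ((SimpleGraph.pathGraph s).boxProd (SimpleGraph.pathGraph t)).Adj p q2 →
      q1 ≠ q2 →
      ∀ (P : Fin s × Fin t → Prop) (inst : DecidablePred P),
      (∀ z : Fin s × Fin t,
        ((SimpleGraph.pathGraph s).boxProd (SimpleGraph.pathGraph t)).edgeDist s(p, q1) z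
          ≠ ((SimpleGraph.pathGraph s).boxProd (SimpleGraph.pathGraph t)).edgeDist s(p, q2) z
        → P z) →
      1 ≤ ∑ z ∈ @Finset.filter _ P inst Finset.univ, g z := by
    intro p q1 q2 ha1 ha2 hq12 P inst himp
    have hne : s(p, q1) ≠ s(p, q2) := by
      intro hEq
      rcases Sym2.eq_iff.mp hEq with ⟨-, h⟩ | ⟨h1, h2⟩
      · exact hq12 h
      · exact hq12 (h2.trans h1)
    refine le_trans
      (hgres _ (((SimpleGraph.pathGraph s).boxProd (SimpleGraph.pathGraph t)).mem_edgeSet.mpr ha1)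
        _ (((SimpleGraph.pathGraph s).boxProd (SimpleGraph.pathGraph t)).mem_edgeSet.mpr ha2) hne)
      (Finset.sum_le_sum_of_subset_of_nonneg ?_ (fun i _ _ => (hg01 i).1))
    intro z hz
    rw [Finset.mem_filter] at hz ⊢
    exact ⟨Finset.mem_univ _, himp z hz.2⟩
  have h1 : (1:ℝ) ≤ ∑ z ∈ Finset.univ.filter
      (fun z : Fin s × Fin t => (z.2.val = 0 ∧ 1 ≤ z.1.val) ∨ (z.1.val = 0 ∧ 1 ≤ z.2.val)),
      g z := by
    refine corner (⟨0, by omega⟩, ⟨0, by omega⟩) (⟨1, by omega⟩, ⟨0, by omega⟩)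
      (⟨0, by omega⟩, ⟨1, by omega⟩)
      (boxProd_adj.mpr (Or.inl ⟨pathGraph_adj.mpr (Or.inl rfl), rfl⟩))
      (boxProd_adj.mpr (Or.inr ⟨pathGraph_adj.mpr (Or.inl rfl), rfl⟩))
      (by simp [Prod.ext_iff, Fin.ext_iff]) _ _ ?_
    rintro ⟨zi, zj⟩ hd
    have hi := zi.isLt; have hj := zj.isLt
    simp only [grid_edgeDist, Nat.dist, Nat.sub_zero, Nat.zero_sub, Nat.add_zero,
      Nat.zero_add] at hd
    dsimp only
    omega
  have h2 : (1:ℝ) ≤ ∑ z ∈ Finset.univ.filter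
      (fun z : Fin s × Fin t => (z.2.val = 0 ∧ z.1.val + 1 ≤ s - 1) ∨
        (z.1.val = s - 1 ∧ 1 ≤ z.2.val)), g z := by
    refine corner (⟨s - 1, by omega⟩, ⟨0, by omega⟩) (⟨s - 2, by omega⟩, ⟨0, by omega⟩)
      (⟨s - 1, by omega⟩, ⟨1, by omega⟩)
      (boxProd_adj.mpr (Or.inl ⟨pathGraph_adj.mpr (Or.inr (show s - 2 + 1 = s - 1 by omega)),
        rfl⟩))
      (boxProd_adj.mpr (Or.inr ⟨pathGraph_adj.mpr (Or.inl rfl), rfl⟩))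
      (by simp [Prod.ext_iff, Fin.ext_iff]; try omega) _ _ ?_
    rintro ⟨zi, zj⟩ hd
    have hi := zi.isLt; have hj := zj.isLt
    simp only [grid_edgeDist, Nat.dist, Nat.sub_zero, Nat.zero_sub, Nat.add_zero,
      Nat.zero_add] at hd
    dsimp only
    omega
  have h3 : (1:ℝ) ≤ ∑ z ∈ Finset.univ.filter
      (fun z : Fin s × Fin t => (z.2.val = t - 1 ∧ 1 ≤ z.1.val) ∨
        (z.1.val = 0 ∧ z.2.val + 1 ≤ t - 1)), g z := by
    refine corner (⟨0, by omega⟩, ⟨t - 1, by omega⟩) (⟨1, by omega⟩, ⟨t - 1, by omega⟩)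
      (⟨0, by omega⟩, ⟨t - 2, by omega⟩)
      (boxProd_adj.mpr (Or.inl ⟨pathGraph_adj.mpr (Or.inl rfl), rfl⟩))
      (boxProd_adj.mpr (Or.inr ⟨pathGraph_adj.mpr (Or.inr (show t - 2 + 1 = t - 1 by omega)),
        rfl⟩))
      (by simp [Prod.ext_iff, Fin.ext_iff]; try omega) _ _ ?_
    rintro ⟨zi, zj⟩ hd
    have hi := zi.isLt; have hj := zj.isLt
    simp only [grid_edgeDist, Nat.dist, Nat.sub_zero, Nat.zero_sub, Nat.add_zero,
      Nat.zero_add] at hd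
    dsimp only
    omega
  have h4 : (1:ℝ) ≤ ∑ z ∈ Finset.univ.filter
      (fun z : Fin s × Fin t => (z.2.val = t - 1 ∧ z.1.val + 1 ≤ s - 1) ∨
        (z.1.val = s - 1 ∧ z.2.val + 1 ≤ t - 1)), g z := by
    refine corner (⟨s - 1, by omega⟩, ⟨t - 1, by omega⟩) (⟨s - 2, by omega⟩, ⟨t - 1, by omega⟩)
      (⟨s - 1, by omega⟩, ⟨t - 2, by omega⟩)
      (boxProd_adj.mpr (Or.inl ⟨pathGraph_adj.mpr (Or.inr (show s - 2 + 1 = s - 1 by omega)),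
        rfl⟩))
      (boxProd_adj.mpr (Or.inr ⟨pathGraph_adj.mpr (Or.inr (show t - 2 + 1 = t - 1 by omega)),
        rfl⟩))
      (by simp [Prod.ext_iff, Fin.ext_iff]; try omega) _ _ ?_
    rintro ⟨zi, zj⟩ hd
    have hi := zi.isLt; have hj := zj.isLt
    simp only [grid_edgeDist, Nat.dist, Nat.sub_zero, Nat.zero_sub, Nat.add_zero,
      Nat.zero_add] at hd
    dsimp only
    omega
  have hcomb : ∑ z ∈ Finset.univ.filter
        (fun z : Fin s × Fin t => (z.2.val = 0 ∧ 1 ≤ z.1.val) ∨ (z.1.val = 0 ∧ 1 ≤ z.2.val)), g z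
      + ∑ z ∈ Finset.univ.filter
        (fun z : Fin s × Fin t => (z.2.val = 0 ∧ z.1.val + 1 ≤ s - 1) ∨
          (z.1.val = s - 1 ∧ 1 ≤ z.2.val)), g z
      + ∑ z ∈ Finset.univ.filter
        (fun z : Fin s × Fin t => (z.2.val = t - 1 ∧ 1 ≤ z.1.val) ∨
          (z.1.val = 0 ∧ z.2.val + 1 ≤ t - 1)), g z
      + ∑ z ∈ Finset.univ.filter
        (fun z : Fin s × Fin t => (z.2.val = t - 1 ∧ z.1.val + 1 ≤ s - 1) ∨
          (z.1.val = s - 1 ∧ z.2.val + 1 ≤ t - 1)), g z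
      ≤ 2 * ∑ v, g v := by
    rw [Finset.sum_filter, Finset.sum_filter, Finset.sum_filter, Finset.sum_filter,
      ← Finset.sum_add_distrib, ← Finset.sum_add_distrib, ← Finset.sum_add_distrib,
      Finset.mul_sum]
    refine Finset.sum_le_sum ?_
    rintro ⟨zi, zj⟩ -
    have hi := zi.isLt; have hj := zj.isLt
    have h0 := (hg01 (zi, zj)).1
    dsimp only
    split_ifs <;> first | (exfalso; omega) | linarith
  linarith

end Aux

/-- For `s, t ≥ 2`, the grid graph `P_s □ P_t` satisfies `edim_f(P_s □ P_t) = 2`. -/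
theorem stmt_18 (s t : ℕ) (hs : 2 ≤ s) (ht : 2 ≤ t) :
    ((SimpleGraph.pathGraph s).boxProd (SimpleGraph.pathGraph t)).edimf = 2 := by
  obtain ⟨g0, hg0, hsum0⟩ := grid_upper hs ht
  have h2mem : (2 : ℝ) ∈ {x | ∃ g : Fin s × Fin t → ℝ,
      ((SimpleGraph.pathGraph s).boxProd (SimpleGraph.pathGraph t)).IsEdgeResolvingFunction g ∧
      ∑ v, g v = x} := ⟨g0, hg0, hsum0⟩
  have hlb : ∀ x ∈ {x | ∃ g : Fin s × Fin t → ℝ,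
      ((SimpleGraph.pathGraph s).boxProd (SimpleGraph.pathGraph t)).IsEdgeResolvingFunction g ∧
      ∑ v, g v = x}, (2 : ℝ) ≤ x := by
    rintro x ⟨g, hg, rfl⟩
    exact grid_lower hs ht g hg
  rw [SimpleGraph.edimf]
  exact le_antisymm (csInf_le ⟨2, hlb⟩ h2mem) (le_csInf ⟨2, h2mem⟩ hlb)
end

section
/- If G is a connected graph of order n ≥ 3 such that every vertex has a twin distinct from itself (i.e., the vertex set partitions into twin equivalence classes each of size at least 2, or G = K_n), then edim_f(G) = n/2. -/
open Finset
open scoped Classical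

variable {V : Type*}

namespace EdimfAux

variable {G : SimpleGraph V}

lemma edgeDist_mk (G : SimpleGraph V) (a b v : V) :
    G.edgeDist s(a, b) v = min (G.dist a v) (G.dist b v) := rfl

/-- Twin adjacency transfer. -/
lemma twin_adj {x y z : V} (h : G.neighborSet x \ {y} = G.neighborSet y \ {x})
    (hzx : z ≠ x) (hzy : z ≠ y) : G.Adj x z ↔ G.Adj y z := by
  have hz := Set.ext_iff.mp h z
  simp only [Set.mem_diff, SimpleGraph.mem_neighborSet, Set.mem_singleton_iff] at hz
  constructor
  · intro hx; exact (hz.mp ⟨hx, hzy⟩).1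
  · intro hy; exact (hz.mpr ⟨hy, hzx⟩).1

lemma twin_trans_aux {x y w z : V}
    (hxw : G.neighborSet x \ {w} = G.neighborSet w \ {x})
    (hyw : G.neighborSet y \ {w} = G.neighborSet w \ {y})
    (hx : x ≠ w) (hy : y ≠ w) (hxy : x ≠ y)
    (hadj : G.Adj x z) (hzy : z ≠ y) : G.Adj y z := by
  by_cases hzw : z = w
  · subst hzw
    have h1 : G.Adj x y ↔ G.Adj z y := twin_adj hxw hxy.symm hy
    have h2 : G.Adj y x ↔ G.Adj z x := twin_adj hyw hxy hx
    exact (h1.mp (h2.mpr hadj.symm).symm).symm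
  · have h1 : G.Adj x z ↔ G.Adj w z := twin_adj hxw hadj.ne' hzw
    have h2 : G.Adj y z ↔ G.Adj w z := twin_adj hyw hzy hzw
    exact h2.mpr (h1.mp hadj)

lemma twin_trans {x y w : V}
    (hxw : G.neighborSet x \ {w} = G.neighborSet w \ {x})
    (hyw : G.neighborSet y \ {w} = G.neighborSet w \ {y})
    (hx : x ≠ w) (hy : y ≠ w) (hxy : x ≠ y) :
    G.neighborSet x \ {y} = G.neighborSet y \ {x} := by
  ext z
  simp only [Set.mem_diff, SimpleGraph.mem_neighborSet, Set.mem_singleton_iff]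
  constructor
  · rintro ⟨hxz, hzy⟩
    exact ⟨twin_trans_aux hxw hyw hx hy hxy hxz hzy, hxz.ne'⟩
  · rintro ⟨hyz, hzx⟩
    exact ⟨twin_trans_aux hyw hxw hy hx hxy.symm hyz hzx, hyz.ne'⟩

lemma twin_dist_le (hG : G.Connected) {x y z : V}
    (h : G.neighborSet x \ {y} = G.neighborSet y \ {x})
    (hzx : z ≠ x) (hzy : z ≠ y) :
    G.dist y z ≤ G.dist x z := by
  obtain ⟨p, hp⟩ := hG.exists_walk_length_eq_dist x z
  cases p with
  | nil => exact absurd rfl hzx.symm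
  | cons hadj q =>
    rename_i u
    rw [SimpleGraph.Walk.length_cons] at hp
    by_cases huy : u = y
    · have h1 : G.dist y z ≤ q.length := by rw [← huy]; exact SimpleGraph.dist_le q
      omega
    · have hyu : G.Adj y u := (twin_adj h hadj.ne' huy).mp hadj
      have h1 : G.dist y z ≤ (SimpleGraph.Walk.cons hyu q).length := SimpleGraph.dist_le _
      rw [SimpleGraph.Walk.length_cons] at h1
      omega

lemma twin_dist_eq (hG : G.Connected) {x y z : V}
    (h : G.neighborSet x \ {y} = G.neighborSet y \ {x})
    (hzx : z ≠ x) (hzy : z ≠ y) :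
    G.dist x z = G.dist y z :=
  le_antisymm (twin_dist_le hG h.symm hzy hzx) (twin_dist_le hG h hzx hzy)

lemma twin_sum [Fintype V] (hG : G.Connected) (hn : 3 ≤ Fintype.card V)
    {g : V → ℝ} (hg : G.IsEdgeResolvingFunction g) {x y : V} (hxy : x ≠ y)
    (h : G.neighborSet x \ {y} = G.neighborSet y \ {x}) :
    1 ≤ g x + g y := by
  -- find a common neighbor w ∉ {x, y}
  have hw : ∃ w, G.Adj x w ∧ w ≠ y := by
    by_contra hcon
    push_neg at hcon
    have hy' : ∀ u, G.Adj y u → u = x := by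
      intro u hu
      by_contra hux
      exact hu.ne' (hcon u ((twin_adj h hux hu.ne').mpr hu))
    obtain ⟨z, hzx, hzy⟩ : ∃ z : V, z ≠ x ∧ z ≠ y := by
      by_contra hc
      push_neg at hc
      have hsub : (Finset.univ : Finset V) ⊆ {x, y} := by
        intro z _
        rcases eq_or_ne z x with rfl | h'
        · simp
        · simp [hc z h']
      have hcard := Finset.card_le_card hsub
      have h2 : ({x, y} : Finset V).card ≤ 2 := Finset.card_insert_le _ _ |>.trans (by simp)
      rw [Finset.card_univ] at hcard
      omega
    have noreach : ∀ (n : ℕ) (a : V) (p : G.Walk a z), p.length ≤ n → a = x ∨ a = y → False := by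
      intro n
      induction n with
      | zero =>
        intro a p hp hax
        have hz : a = z := p.eq_of_length_eq_zero (Nat.le_zero.mp hp)
        rcases hax with rfl | rfl
        · exact hzx hz.symm
        · exact hzy hz.symm
      | succ n ih =>
        intro a p hp hax
        cases p with
        | nil =>
          rcases hax with h | h
          · exact hzx h
          · exact hzy h
        | cons hadj q =>
          rw [SimpleGraph.Walk.length_cons] at hp
          rcases hax with rfl | rfl
          · exact ih _ q (by omega) (Or.inr (hcon _ hadj))
          · exact ih _ q (by omega) (Or.inl (hy' _ hadj))
    exact noreach ((hG x z).some.length) x ((hG x z).some) le_rfl (Or.inl rfl)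
  obtain ⟨w, hxw, hwy⟩ := hw
  have hwx : w ≠ x := hxw.ne'
  have hyw : G.Adj y w := (twin_adj h hwx hwy).mp hxw
  have hne : s(x, w) ≠ s(y, w) := by
    intro heq
    rcases Sym2.eq_iff.mp heq with ⟨h1, _⟩ | ⟨h1, h2⟩
    · exact hxy h1
    · exact hwx h1.symm
  have hsum := hg.2 s(x, w) (G.mem_edgeSet.mpr hxw) s(y, w) (G.mem_edgeSet.mpr hyw) hne
  have hsub : (Finset.univ.filter fun z => G.edgeDist s(x, w) z ≠ G.edgeDist s(y, w) z)
      ⊆ {x, y} := by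
    intro z hz
    simp only [Finset.mem_filter, Finset.mem_univ, true_and] at hz
    by_contra hzc
    simp only [Finset.mem_insert, Finset.mem_singleton, not_or] at hzc
    apply hz
    rw [edgeDist_mk, edgeDist_mk, twin_dist_eq hG h hzc.1 hzc.2]
  calc (1 : ℝ) ≤ _ := hsum
    _ ≤ ∑ z ∈ ({x, y} : Finset V), g z :=
      Finset.sum_le_sum_of_subset_of_nonneg hsub (fun i _ _ => (hg.1 i).1)
    _ = g x + g y := Finset.sum_pair hxy

lemma sym2_exists_not_mem {a b c d : V} (hab : a ≠ b) (hne : s(a, b) ≠ s(c, d)) :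
    ∃ u, (u = a ∨ u = b) ∧ u ≠ c ∧ u ≠ d := by
  by_cases hac : a = c
  · subst hac
    refine ⟨b, Or.inr rfl, hab.symm, fun hbd => hne (by rw [hbd])⟩
  · by_cases had : a = d
    · subst had
      refine ⟨b, Or.inr rfl, fun hbc => hne ?_, hab.symm⟩
      rw [hbc]; exact Sym2.eq_swap
    · exact ⟨a, Or.inl rfl, hac, had⟩

lemma half_resolving [Fintype V] (hG : G.Connected) :
    G.IsEdgeResolvingFunction (fun _ : V => (1 : ℝ) / 2) := by
  refine ⟨fun v => by norm_num, ?_⟩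
  intro e1 he1 e2 he2 hne
  induction e1 using Sym2.ind with | _ a b => ?_
  induction e2 using Sym2.ind with | _ c d => ?_
  rw [SimpleGraph.mem_edgeSet] at he1 he2
  obtain ⟨u, hu1, huc, hud⟩ := sym2_exists_not_mem he1.ne hne
  obtain ⟨v, hv1, hva, hvb⟩ := sym2_exists_not_mem he2.ne hne.symm
  have huv : u ≠ v := by
    rcases hv1 with rfl | rfl
    · exact huc
    · exact hud
  have hu_zero : G.edgeDist s(a, b) u = 0 := by
    rw [edgeDist_mk]
    rcases hu1 with rfl | rfl
    · simp [SimpleGraph.dist_self]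
    · simp [SimpleGraph.dist_self]
  have hu_pos : G.edgeDist s(c, d) u ≠ 0 := by
    rw [edgeDist_mk]
    exact (lt_min (hG.pos_dist_of_ne huc.symm) (hG.pos_dist_of_ne hud.symm)).ne'
  have hv_zero : G.edgeDist s(c, d) v = 0 := by
    rw [edgeDist_mk]
    rcases hv1 with rfl | rfl
    · simp [SimpleGraph.dist_self]
    · simp [SimpleGraph.dist_self]
  have hv_pos : G.edgeDist s(a, b) v ≠ 0 := by
    rw [edgeDist_mk]
    exact (lt_min (hG.pos_dist_of_ne hva.symm) (hG.pos_dist_of_ne hvb.symm)).ne'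
  set R := Finset.univ.filter fun z => G.edgeDist s(a, b) z ≠ G.edgeDist s(c, d) z with hR
  have hsub : ({u, v} : Finset V) ⊆ R := by
    intro z hz
    simp only [Finset.mem_insert, Finset.mem_singleton] at hz
    simp only [hR, Finset.mem_filter, Finset.mem_univ, true_and]
    rcases hz with rfl | rfl
    · rw [hu_zero]; exact fun h => hu_pos h.symm
    · rw [hv_zero]; exact hv_pos
  have hcard : 2 ≤ R.card := by
    have := Finset.card_le_card hsub
    rwa [Finset.card_pair huv] at this
  rw [Finset.sum_const, nsmul_eq_mul]
  have : (2 : ℝ) ≤ (R.card : ℝ) := by exact_mod_cast hcard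
  linarith

lemma lower_bound [Fintype V] (hG : G.Connected) (hn : 3 ≤ Fintype.card V)
    (htwin : ∀ v : V, ∃ w : V, w ≠ v ∧
      G.neighborSet v \ {w} = G.neighborSet w \ {v})
    {g : V → ℝ} (hg : G.IsEdgeResolvingFunction g) :
    (Fintype.card V : ℝ) / 2 ≤ ∑ v, g v := by
  choose t ht1 ht2 using htwin
  have hkey : ∀ v, 1 ≤ g v + g (t v) := fun v => twin_sum hG hn hg (ht1 v).symm (ht2 v)
  set N := Finset.univ.filter (fun v => g v < 1 / 2) with hN
  have himg : ∀ v ∈ N, ¬ g (t v) < 1 / 2 := by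
    intro v hv
    simp only [hN, Finset.mem_filter, Finset.mem_univ, true_and] at hv
    have := hkey v
    linarith
  have hinj : ∀ u ∈ N, ∀ v ∈ N, t u = t v → u = v := by
    intro u hu v hv huv
    by_contra hne
    have h2 : G.neighborSet v \ {t u} = G.neighborSet (t u) \ {v} := by
      rw [huv]; exact ht2 v
    have hvt : v ≠ t u := by rw [huv]; exact (ht1 v).symm
    have htw := twin_trans (ht2 u) h2 (ht1 u).symm hvt hne
    have := twin_sum hG hn hg hne htw
    simp only [hN, Finset.mem_filter, Finset.mem_univ, true_and] at hu hv
    linarith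
  have h0 : (0 : ℝ) ≤ ∑ v, (g v - 1 / 2) := by
    have hsplit := Finset.sum_filter_add_sum_filter_not Finset.univ
      (fun v => g v < 1 / 2) (fun v => g v - 1 / 2)
    have himage : N.image t ⊆ Finset.univ.filter (fun v => ¬ g v < 1 / 2) := by
      intro w hw
      simp only [Finset.mem_image] at hw
      obtain ⟨v, hv, rfl⟩ := hw
      simp only [Finset.mem_filter, Finset.mem_univ, true_and]
      exact himg v hv
    have h1 : ∑ w ∈ N.image t, (g w - 1 / 2)
        ≤ ∑ w ∈ Finset.univ.filter (fun v => ¬ g v < 1 / 2), (g w - 1 / 2) := by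
      apply Finset.sum_le_sum_of_subset_of_nonneg himage
      intro i hi _
      simp only [Finset.mem_filter, Finset.mem_univ, true_and, not_lt] at hi
      linarith
    have h2 : ∑ w ∈ N.image t, (g w - 1 / 2) = ∑ v ∈ N, (g (t v) - 1 / 2) :=
      Finset.sum_image hinj
    have h3 : (0 : ℝ) ≤ ∑ v ∈ N, (g v - 1 / 2) + ∑ v ∈ N, (g (t v) - 1 / 2) := by
      rw [← Finset.sum_add_distrib]
      apply Finset.sum_nonneg
      intro v _
      have := hkey v
      linarith
    linarith
  have hEq : ∑ v, (g v - 1 / 2) = (∑ v, g v) - (Fintype.card V : ℝ) / 2 := by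
    rw [Finset.sum_sub_distrib, Finset.sum_const, Finset.card_univ, nsmul_eq_mul]
    ring
  linarith [hEq ▸ h0]

end EdimfAux

/-- If every vertex of a connected graph `G` of order `n ≥ 3` has a twin distinct
from itself, then `edim_f(G) = n/2`. -/
theorem stmt_19 [Fintype V] (G : SimpleGraph V) (hG : G.Connected)
    (hn : 3 ≤ Fintype.card V)
    (htwin : ∀ v : V, ∃ w : V, w ≠ v ∧
      G.neighborSet v \ {w} = G.neighborSet w \ {v}) :
    G.edimf = (Fintype.card V : ℝ) / 2 := by
  have hmem : ((Fintype.card V : ℝ) / 2) ∈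
      {x | ∃ g : V → ℝ, G.IsEdgeResolvingFunction g ∧ ∑ v, g v = x} := by
    refine ⟨fun _ => (1 : ℝ) / 2, EdimfAux.half_resolving hG, ?_⟩
    rw [Finset.sum_const, Finset.card_univ, nsmul_eq_mul]
    ring
  have hlb : ∀ x ∈ {x | ∃ g : V → ℝ, G.IsEdgeResolvingFunction g ∧ ∑ v, g v = x},
      (Fintype.card V : ℝ) / 2 ≤ x := by
    rintro x ⟨g, hg, rfl⟩
    exact EdimfAux.lower_bound hG hn htwin hg
  exact le_antisymm (csInf_le ⟨_, hlb⟩ hmem) (le_csInf ⟨_, hmem⟩ hlb)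
end
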